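/- Let V be a type and G : (V →₀ ℕ) → [0,1) → ℝ be such that: (i) for each configuration η, z ↦ G(η,z) is differentiable on [0,1); (ii) G(0,·) ≡ 1 (where 0 is the empty configuration); (iii) for every η with |η| ≥ 1 and every z ∈ [0,1): (1−z)·∂_z G(η,z) + |η|·G(η,z) = Σ_{i ∈ η.support} η_i · G(η − δ_i, z); and (iv) the values at z = 0 factorize: G(ξ,0) = Π_{i ∈ ξ.support} G(δ_i, 0)^{ξ_i} for every ξ. Then the full generating functions factorize: G(ξ,z) = Π_{i ∈ ξ.support} G(δ_i, z)^{ξ_i} for every configuration ξ and every z ∈ [0,1). -/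

import Mathlib

lemma keyzero (n : ℕ) (D : ℝ → ℝ)
    (hD : DifferentiableOn ℝ D (Set.Ico 0 1))
    (h0 : D 0 = 0)
    (hode : ∀ z ∈ Set.Ico (0:ℝ) 1,
      (1 - z) * derivWithin D (Set.Ico 0 1) z + (n : ℝ) * D z = 0) :
    ∀ z ∈ Set.Ico (0:ℝ) 1, D z = 0 := by
  set s : Set ℝ := Set.Ico 0 1 with hs
  have hne : ∀ z ∈ s, (1:ℝ) - z ≠ 0 := fun z hz => by
    have : z < 1 := hz.2
    linarith
  have hmem0 : (0:ℝ) ∈ s := by constructor <;> norm_num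
  set F : ℝ → ℝ := fun z => D z * ((1 - z) ^ n)⁻¹ with hF
  have hFd : ∀ z ∈ s, HasDerivWithinAt F 0 s z := by
    intro z hz
    have h1 : HasDerivWithinAt D (derivWithin D s z) s z :=
      (hD z hz).hasDerivWithinAt
    have h2 : HasDerivWithinAt (fun z : ℝ => (1 - z) ^ n)
        ((n : ℝ) * (1 - z) ^ (n - 1) * (-1)) s z := by
      have : HasDerivWithinAt (fun z : ℝ => 1 - z) (-1) s z := by
        simpa using (hasDerivWithinAt_id z s).const_sub (1:ℝ)
      exact this.pow n
    have h3 := h2.inv (pow_ne_zero n (hne z hz))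
    have h4 := h1.mul h3
    refine h4.congr_deriv ?_
    simp only [Pi.inv_apply]
    have ho := hode z hz
    have hz1 := hne z hz
    obtain _ | m := n
    · simp only [Nat.cast_zero, zero_mul, add_zero] at ho
      have : derivWithin D s z = 0 := by
        rcases mul_eq_zero.1 ho with h | h
        · exact absurd h hz1
        · exact h
      simp [this]
    · have hp : (1 - z) ^ (m + 1) ≠ 0 := pow_ne_zero _ hz1
      have hd : derivWithin D s z = -((m+1: ℝ) * D z) / (1 - z) := by
        field_simp
        push_cast at ho ⊢
        linear_combination ho
      rw [hd]
      field_simp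
      push_cast
      ring
  have hconst : ∀ z ∈ s, F z = F 0 := by
    intro z hz
    refine (convex_Ico (0:ℝ) 1).is_const_of_fderivWithin_eq_zero
      (fun w hw => (hFd w hw).differentiableWithinAt) (fun w hw => ?_) hz hmem0
    have := (hFd w hw).hasFDerivWithinAt.fderivWithin ((uniqueDiffOn_Ico 0 1) w hw)
    rw [this]
    exact ContinuousLinearMap.ext fun t => by simp
  intro z hz
  have := hconst z hz
  have hF0 : F 0 = 0 := by simp [hF, h0]
  rw [hF0, hF] at this
  have hinv : ((1 - z) ^ n)⁻¹ ≠ 0 := inv_ne_zero (pow_ne_zero n (hne z hz))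
  exact (mul_eq_zero.1 this).resolve_right hinv

/-- **Factorization of the generating function** (Remark, Section 7): if `G` satisfies
the consistency ODE `(1-z) ∂_z G(η,z) + |η| G(η,z) = ∑_i η_i G(η-δ_i,z)`, equals `1` on
the empty configuration, and its values at `z = 0` factorize over particles, then the
full generating functions factorize. -/
theorem stmt19 {V : Type*}
    (G : (V →₀ ℕ) → ℝ → ℝ)
    (hdiff : ∀ η : V →₀ ℕ, DifferentiableOn ℝ (G η) (Set.Ico 0 1))
    (hempty : ∀ z ∈ Set.Ico (0 : ℝ) 1, G 0 z = 1)
    (hode : ∀ η : V →₀ ℕ, 1 ≤ ∑ x ∈ η.support, η x →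
        ∀ z ∈ Set.Ico (0 : ℝ) 1,
        (1 - z) * derivWithin (G η) (Set.Ico 0 1) z
            + ((∑ x ∈ η.support, η x : ℕ) : ℝ) * G η z
          = ∑ i ∈ η.support, (η i : ℝ) * G (η - Finsupp.single i 1) z)
    (hfact0 : ∀ ξ : V →₀ ℕ, G ξ 0 = ∏ i ∈ ξ.support, G (Finsupp.single i 1) 0 ^ ξ i) :
    ∀ ξ : V →₀ ℕ, ∀ z ∈ Set.Ico (0 : ℝ) 1,
      G ξ z = ∏ i ∈ ξ.support, G (Finsupp.single i 1) z ^ ξ i := by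
  classical
  -- single particle ODE
  have hsingle : ∀ (i : V), ∀ z ∈ Set.Ico (0:ℝ) 1,
      (1 - z) * derivWithin (G (Finsupp.single i (1:ℕ))) (Set.Ico 0 1) z
        + G (Finsupp.single i (1:ℕ)) z = 1 := by
    intro i z hz
    have hsupp : (Finsupp.single i (1:ℕ)).support = {i} :=
      Finsupp.support_single_ne_zero i one_ne_zero
    have hsum : ∑ x ∈ (Finsupp.single i (1:ℕ)).support, Finsupp.single i (1:ℕ) x = 1 := by
      rw [hsupp]; simp
    have h := hode (Finsupp.single i (1:ℕ)) (le_of_eq hsum.symm) z hz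
    rw [hsum] at h
    rw [hsupp, Finset.sum_singleton, Finsupp.single_eq_same] at h
    rw [tsub_self, hempty z hz] at h
    simpa using h
  suffices key : ∀ n : ℕ, ∀ ξ : V →₀ ℕ, (∑ x ∈ ξ.support, ξ x) = n →
      ∀ z ∈ Set.Ico (0:ℝ) 1, G ξ z = ∏ i ∈ ξ.support, G (Finsupp.single i (1:ℕ)) z ^ ξ i from
    fun ξ => key _ ξ rfl
  intro n
  induction n with
  | zero =>
    intro ξ hξ z hz
    have hξ0 : ξ = 0 := by
      ext x
      by_cases hx : x ∈ ξ.support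
      · exact (Finset.sum_eq_zero_iff.1 hξ) x hx
      · simpa using Finsupp.notMem_support_iff.1 hx
    subst hξ0
    simpa using hempty z hz
  | succ n ih =>
    intro ξ hξ
    set S := ξ.support with hS
    have hmem : ∀ i ∈ S, 1 ≤ ξ i := fun i hi =>
      Nat.one_le_iff_ne_zero.2 (Finsupp.mem_support_iff.1 hi)
    -- values of ξ - δ i
    have happly : ∀ i, ∀ j, (ξ - Finsupp.single i (1:ℕ)) j
        = if j = i then ξ i - 1 else ξ j := by
      intro i j
      rw [Finsupp.tsub_apply]
      by_cases h : j = i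
      · subst h; simp
      · simp [Finsupp.single_eq_of_ne (Ne.symm h), h]
    have hsubS : ∀ i : V, (ξ - Finsupp.single i (1:ℕ)).support ⊆ S :=
      fun i => Finsupp.support_tsub
    -- extend sums/products from the support of ξ - δ i to S
    have hprodS : ∀ i ∈ S, ∀ z : ℝ,
        (∏ j ∈ (ξ - Finsupp.single i (1:ℕ)).support,
            G (Finsupp.single j (1:ℕ)) z ^ (ξ - Finsupp.single i (1:ℕ)) j)
          = ∏ j ∈ S, G (Finsupp.single j (1:ℕ)) z ^ (ξ - Finsupp.single i (1:ℕ)) j := by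
      intro i hi z
      refine Finset.prod_subset (hsubS i) (fun x _ hx => ?_)
      rw [Finsupp.notMem_support_iff.1 hx, pow_zero]
    have hsum' : ∀ i ∈ S, (∑ x ∈ (ξ - Finsupp.single i (1:ℕ)).support,
        (ξ - Finsupp.single i (1:ℕ)) x) = n := by
      intro i hi
      have h1 : (∑ x ∈ (ξ - Finsupp.single i (1:ℕ)).support, (ξ - Finsupp.single i (1:ℕ)) x)
          = ∑ x ∈ S, (ξ - Finsupp.single i (1:ℕ)) x := by
        refine Finset.sum_subset (hsubS i) (fun x _ hx => ?_)
        exact Finsupp.notMem_support_iff.1 hx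
      rw [h1, ← Finset.add_sum_erase _ _ hi, happly i i, if_pos rfl]
      rw [← Finset.add_sum_erase _ _ hi] at hξ
      have h2 : ∑ x ∈ S.erase i, (ξ - Finsupp.single i (1:ℕ)) x = ∑ x ∈ S.erase i, ξ x := by
        refine Finset.sum_congr rfl (fun x hx => ?_)
        rw [happly i x, if_neg (Finset.ne_of_mem_erase hx)]
      rw [h2]
      have := hmem i hi
      omega
    -- induction hypothesis, over the bigger index set S
    have hIH : ∀ i ∈ S, ∀ z ∈ Set.Ico (0:ℝ) 1,
        G (ξ - Finsupp.single i (1:ℕ)) z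
          = ∏ j ∈ S, G (Finsupp.single j (1:ℕ)) z ^ (ξ - Finsupp.single i (1:ℕ)) j := by
      intro i hi z hz
      rw [ih (ξ - Finsupp.single i (1:ℕ)) (hsum' i hi) z hz, hprodS i hi z]
    set H : ℝ → ℝ := fun w => ∏ i ∈ S, G (Finsupp.single i (1:ℕ)) w ^ ξ i with hH
    set Hd : ℝ → ℝ := fun z => ∑ i ∈ S,
        (∏ j ∈ S.erase i, G (Finsupp.single j (1:ℕ)) z ^ ξ j)
          • ((ξ i : ℝ) * G (Finsupp.single i (1:ℕ)) z ^ (ξ i - 1)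
              * derivWithin (G (Finsupp.single i (1:ℕ))) (Set.Ico 0 1) z) with hHd
    have hHderiv : ∀ z ∈ Set.Ico (0:ℝ) 1, HasDerivWithinAt H (Hd z) (Set.Ico 0 1) z := by
      intro z hz
      exact HasDerivWithinAt.fun_finsetProd (fun i _ =>
        ((hdiff (Finsupp.single i (1:ℕ)) z hz).hasDerivWithinAt).pow (ξ i))
    have hHdiff : DifferentiableOn ℝ H (Set.Ico 0 1) :=
      fun z hz => (hHderiv z hz).differentiableWithinAt
    -- the difference satisfies the homogeneous ODE
    set D : ℝ → ℝ := fun w => G ξ w - H w with hD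
    have hDdiff : DifferentiableOn ℝ D (Set.Ico 0 1) := (hdiff ξ).sub hHdiff
    have hD0 : D 0 = 0 := by
      simp only [hD, hH]
      rw [hfact0 ξ]
      ring
    have hDode : ∀ z ∈ Set.Ico (0:ℝ) 1,
        (1 - z) * derivWithin D (Set.Ico 0 1) z + ((n+1 : ℕ) : ℝ) * D z = 0 := by
      intro z hz
      have hdw : derivWithin D (Set.Ico 0 1) z
          = derivWithin (G ξ) (Set.Ico 0 1) z - Hd z :=
        (((hdiff ξ z hz).hasDerivWithinAt).sub (hHderiv z hz)).derivWithin
          ((uniqueDiffOn_Ico 0 1) z hz)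
      have hG := hode ξ (by rw [hξ]; omega) z hz
      rw [hξ] at hG
      -- ODE satisfied by H
      have hHode : (1 - z) * Hd z + ((n+1 : ℕ) : ℝ) * H z
          = ∑ i ∈ S, (ξ i : ℝ) * G (ξ - Finsupp.single i (1:ℕ)) z := by
        have hcast : ((n+1 : ℕ) : ℝ) = ∑ i ∈ S, (ξ i : ℝ) := by
          rw [← hξ]; push_cast; rfl
        rw [hcast, Finset.sum_mul,
          hHd, Finset.mul_sum, ← Finset.sum_add_distrib]
        refine Finset.sum_congr rfl (fun i hi => ?_)
        have hGsub : G (ξ - Finsupp.single i (1:ℕ)) z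
            = G (Finsupp.single i (1:ℕ)) z ^ (ξ i - 1)
              * ∏ j ∈ S.erase i, G (Finsupp.single j (1:ℕ)) z ^ ξ j := by
          rw [hIH i hi z hz, ← Finset.mul_prod_erase _ _ hi, happly i i, if_pos rfl]
          congr 1
          refine Finset.prod_congr rfl (fun x hx => ?_)
          rw [happly i x, if_neg (Finset.ne_of_mem_erase hx)]
        have hHz : H z = G (Finsupp.single i (1:ℕ)) z
            * (G (Finsupp.single i (1:ℕ)) z ^ (ξ i - 1)
              * ∏ j ∈ S.erase i, G (Finsupp.single j (1:ℕ)) z ^ ξ j) := by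
          have hp : G (Finsupp.single i (1:ℕ)) z ^ ξ i
              = G (Finsupp.single i (1:ℕ)) z * G (Finsupp.single i (1:ℕ)) z ^ (ξ i - 1) := by
            conv_lhs => rw [show ξ i = (ξ i - 1) + 1 by have := hmem i hi; omega]
            rw [pow_succ']
          rw [hH]
          simp only
          rw [← Finset.mul_prod_erase _ _ hi, hp, mul_assoc]
        rw [hGsub, hHz, smul_eq_mul]
        linear_combination ((ξ i : ℝ) * G (Finsupp.single i (1:ℕ)) z ^ (ξ i - 1)
          * ∏ j ∈ S.erase i, G (Finsupp.single j (1:ℕ)) z ^ ξ j) * (hsingle i z hz)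
      -- replace G of subconfigurations in hG is not needed; both sides equal the same sum
      rw [hdw]
      simp only [hD]
      have : (1 - z) * (derivWithin (G ξ) (Set.Ico 0 1) z - Hd z)
          + ((n+1 : ℕ) : ℝ) * (G ξ z - H z)
          = ((1 - z) * derivWithin (G ξ) (Set.Ico 0 1) z + ((n+1 : ℕ) : ℝ) * G ξ z)
            - ((1 - z) * Hd z + ((n+1 : ℕ) : ℝ) * H z) := by ring
      rw [this, hG, hHode, sub_self]
    have hzero := keyzero (n+1) D hDdiff hD0 (by exact_mod_cast hDode)
    intro z hz
    have := hzero z hz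
    simp only [hD, hH] at this
    linarith [this]
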